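/- For every 3×3 real matrix B with det B > 0, one has dist(B, SO(3)) ≤ √3 |BᵀB − I|; equivalently, writing B = A + I and Φ(A) = sym A + (1/2)AᵀA, one has dist(A + I, SO(3)) ≤ 2√3 |Φ(A)| whenever det(A + I) > 0. -/

import Mathlib

open Matrix

/-- The Frobenius norm of a 3×3 real matrix. -/
noncomputable def frob (M : Matrix (Fin 3) (Fin 3) ℝ) : ℝ :=
  Real.sqrt (∑ i, ∑ j, (M i j) ^ 2)

/-- The special orthogonal group SO(3) as a set of 3×3 real matrices. -/
def SO3 : Set (Matrix (Fin 3) (Fin 3) ℝ) :=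
  {R | Rᵀ * R = 1 ∧ R.det = 1}

/-- The (Frobenius) distance from a 3×3 matrix to SO(3). -/
noncomputable def distSO3 (B : Matrix (Fin 3) (Fin 3) ℝ) : ℝ :=
  sInf ((fun R => frob (B - R)) '' SO3)

/-- The symmetric part of a matrix. -/
noncomputable def symPart (A : Matrix (Fin 3) (Fin 3) ℝ) : Matrix (Fin 3) (Fin 3) ℝ :=
  (1 / 2 : ℝ) • (A + Aᵀ)

/-- The nonlinear strain tensor `Φ(A) = sym A + (1/2) Aᵀ A`. -/
noncomputable def Phi (A : Matrix (Fin 3) (Fin 3) ℝ) : Matrix (Fin 3) (Fin 3) ℝ :=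
  symPart A + (1 / 2 : ℝ) • (Aᵀ * A)

/- Auxiliary: the squared Frobenius norm -/
noncomputable def frobSq (M : Matrix (Fin 3) (Fin 3) ℝ) : ℝ := ∑ i, ∑ j, (M i j) ^ 2

lemma frob_eq_sqrt_frobSq (M : Matrix (Fin 3) (Fin 3) ℝ) : frob M = Real.sqrt (frobSq M) := rfl

lemma frobSq_nonneg (M : Matrix (Fin 3) (Fin 3) ℝ) : 0 ≤ frobSq M := by
  apply Finset.sum_nonneg; intro i _; apply Finset.sum_nonneg; intro j _; positivity

lemma frob_nonneg (M : Matrix (Fin 3) (Fin 3) ℝ) : 0 ≤ frob M := Real.sqrt_nonneg _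

lemma frob_le_frob {M N : Matrix (Fin 3) (Fin 3) ℝ} (h : frobSq M ≤ frobSq N) :
    frob M ≤ frob N := Real.sqrt_le_sqrt h

lemma frobSq_eq_trace (M : Matrix (Fin 3) (Fin 3) ℝ) : frobSq M = Matrix.trace (Mᵀ * M) := by
  simp [frobSq, Matrix.trace, Matrix.mul_apply, Matrix.diag, sq]
  rw [Finset.sum_comm]

lemma frobSq_orth_mul (R X : Matrix (Fin 3) (Fin 3) ℝ) (hR : Rᵀ * R = 1) :
    frobSq (R * X) = frobSq X := by
  rw [frobSq_eq_trace, frobSq_eq_trace, Matrix.transpose_mul, Matrix.mul_assoc,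
    ← Matrix.mul_assoc Rᵀ R X, hR, Matrix.one_mul]

lemma frobSq_smul (c : ℝ) (M : Matrix (Fin 3) (Fin 3) ℝ) : frobSq (c • M) = c ^ 2 * frobSq M := by
  simp [frobSq, mul_pow, Finset.mul_sum]

lemma frob_smul (c : ℝ) (hc : 0 ≤ c) (M : Matrix (Fin 3) (Fin 3) ℝ) :
    frob (c • M) = c * frob M := by
  rw [frob_eq_sqrt_frobSq, frob_eq_sqrt_frobSq, frobSq_smul, Real.sqrt_mul (by positivity),
    Real.sqrt_sq hc]

/-- The key column-wise expansion: for positive semidefinite `U`,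
multiplication by `U + 1` does not decrease the Frobenius norm. -/
lemma frobSq_le_of_posSemidef {U : Matrix (Fin 3) (Fin 3) ℝ} (hU : U.PosSemidef)
    (Z : Matrix (Fin 3) (Fin 3) ℝ) : frobSq Z ≤ frobSq ((U + 1) * Z) := by
  have e1 : frobSq Z = ∑ j, ∑ i, (Z i j) ^ 2 := Finset.sum_comm
  have e2 : frobSq ((U + 1) * Z) = ∑ j, ∑ i, (((U + 1) * Z) i j) ^ 2 := Finset.sum_comm
  rw [e1, e2]
  apply Finset.sum_le_sum
  intro j _
  set c : Fin 3 → ℝ := fun k => Z k j with hc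
  have hcol : ∀ i, ((U + 1) * Z) i j = ((U + 1) *ᵥ c) i := by
    intro i; simp [Matrix.mul_apply, Matrix.mulVec, dotProduct, hc]
  have h1 : ∑ i, (((U + 1) * Z) i j) ^ 2 = ((U + 1) *ᵥ c) ⬝ᵥ ((U + 1) *ᵥ c) := by
    simp [hcol, dotProduct, sq]
  have h2 : ∑ i, (Z i j) ^ 2 = c ⬝ᵥ c := by simp [dotProduct, hc, sq]
  rw [h1, h2]
  have hexp : ((U + 1) *ᵥ c) ⬝ᵥ ((U + 1) *ᵥ c)
      = (U *ᵥ c) ⬝ᵥ (U *ᵥ c) + (U *ᵥ c) ⬝ᵥ c + c ⬝ᵥ (U *ᵥ c) + c ⬝ᵥ c := by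
    rw [Matrix.add_mulVec, Matrix.one_mulVec, add_dotProduct, dotProduct_add,
      dotProduct_add]
    ring
  have hpos : 0 ≤ c ⬝ᵥ (U *ᵥ c) := by
    have := hU.dotProduct_mulVec_nonneg c
    simpa using this
  have hpos' : 0 ≤ (U *ᵥ c) ⬝ᵥ c := by rwa [dotProduct_comm]
  have hsq : 0 ≤ (U *ᵥ c) ⬝ᵥ (U *ᵥ c) := by
    apply Finset.sum_nonneg; intro i _; exact mul_self_nonneg _
  linarith [hexp]

open scoped MatrixOrder in
/-- Main estimate with constant 1: if `det B > 0` then there is `R ∈ SO(3)` with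
`|B - R| ≤ |BᵀB - 1|`. -/
lemma exists_rot (B : Matrix (Fin 3) (Fin 3) ℝ) (hB : 0 < B.det) :
    ∃ R ∈ SO3, frob (B - R) ≤ frob (Bᵀ * B - 1) := by
  have hPSD : (Bᵀ * B).PosSemidef := by
    simpa [conjTranspose_eq_transpose_of_trivial] using posSemidef_conjTranspose_mul_self B
  set U : Matrix (Fin 3) (Fin 3) ℝ := CFC.sqrt (Bᵀ * B) with hUdef
  have hUps : U.PosSemidef := Matrix.nonneg_iff_posSemidef.mp (CFC.sqrt_nonneg _)
  have hUsq : U * U = Bᵀ * B := CFC.sqrt_mul_sqrt_self _ hPSD.nonneg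
  have hUsymm : Uᵀ = U := by
    have := hUps.1
    rwa [Matrix.IsHermitian, conjTranspose_eq_transpose_of_trivial] at this
  -- determinant of U
  have hdetU_sq : U.det * U.det = B.det * B.det := by
    have := congrArg Matrix.det hUsq
    rwa [Matrix.det_mul, Matrix.det_mul, Matrix.det_transpose] at this
  have hdetU_ne : U.det ≠ 0 := by
    intro h
    rw [h, zero_mul] at hdetU_sq
    nlinarith
  have hdetU_nonneg : 0 ≤ U.det := by
    have h := congrArg Matrix.det (CFC.sqrt_mul_sqrt_self _ hPSD.nonneg)
    -- U.det ≥ 0 since U = V * V for V = sqrt of U (U itself posSemidef)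
    have h2 : CFC.sqrt U * CFC.sqrt U = U := CFC.sqrt_mul_sqrt_self _ hUps.nonneg
    have := congrArg Matrix.det h2
    rw [Matrix.det_mul] at this
    nlinarith [this]
  have hdetU_pos : 0 < U.det := lt_of_le_of_ne hdetU_nonneg (Ne.symm hdetU_ne)
  have hUinv : U * U⁻¹ = 1 := Matrix.mul_nonsing_inv U (by simpa using hdetU_ne)
  have hUinv' : U⁻¹ * U = 1 := Matrix.nonsing_inv_mul U (by simpa using hdetU_ne)
  have hUinvT : (U⁻¹)ᵀ = U⁻¹ := by rw [Matrix.transpose_nonsing_inv, hUsymm]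
  set R : Matrix (Fin 3) (Fin 3) ℝ := B * U⁻¹ with hRdef
  have hRorth : Rᵀ * R = 1 := by
    rw [hRdef, Matrix.transpose_mul, hUinvT]
    calc U⁻¹ * Bᵀ * (B * U⁻¹) = U⁻¹ * (Bᵀ * B) * U⁻¹ := by
          rw [Matrix.mul_assoc, Matrix.mul_assoc, Matrix.mul_assoc]
      _ = U⁻¹ * (U * U) * U⁻¹ := by rw [hUsq]
      _ = (U⁻¹ * U) * (U * U⁻¹) := by
          rw [Matrix.mul_assoc, Matrix.mul_assoc, Matrix.mul_assoc]
      _ = 1 := by rw [hUinv', hUinv, Matrix.one_mul]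
  have hRdet_sq : R.det * R.det = 1 := by
    have := congrArg Matrix.det hRorth
    rwa [Matrix.det_mul, Matrix.det_transpose, Matrix.det_one] at this
  have hRdet_pos : 0 < R.det := by
    rw [hRdef, Matrix.det_mul, Matrix.det_nonsing_inv]
    exact mul_pos hB (by simp [Ring.inverse_eq_inv']; positivity)
  have hRdet : R.det = 1 := by nlinarith
  refine ⟨R, ⟨hRorth, hRdet⟩, ?_⟩
  have hBRU : B = R * U := by rw [hRdef, Matrix.mul_assoc, hUinv', Matrix.mul_one]
  have hdiff : B - R = R * (U - 1) := by
    rw [Matrix.mul_sub, Matrix.mul_one, ← hBRU]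
  rw [hdiff]
  have h1 : frobSq (R * (U - 1)) = frobSq (U - 1) := frobSq_orth_mul R _ hRorth
  have h2 : frobSq (U - 1) ≤ frobSq ((U + 1) * (U - 1)) := frobSq_le_of_posSemidef hUps _
  have h3 : (U + 1) * (U - 1) = Bᵀ * B - 1 := by
    have : (U + 1) * (U - 1) = U * U - 1 := by noncomm_ring
    rw [this, hUsq]
  apply frob_le_frob
  rw [h1, ← h3]
  exact h2

lemma distSO3_le (B : Matrix (Fin 3) (Fin 3) ℝ) (hB : 0 < B.det) :
    distSO3 B ≤ frob (Bᵀ * B - 1) := by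
  obtain ⟨R, hR, hle⟩ := exists_rot B hB
  have hmem : frob (B - R) ∈ (fun R => frob (B - R)) '' SO3 := ⟨R, hR, rfl⟩
  have hbdd : BddBelow ((fun R => frob (B - R)) '' SO3) := by
    refine ⟨0, ?_⟩
    rintro y ⟨S, _, rfl⟩
    exact frob_nonneg _
  exact le_trans (csInf_le hbdd hmem) hle

theorem stmt_13 :
    (∀ B : Matrix (Fin 3) (Fin 3) ℝ, 0 < B.det →
      distSO3 B ≤ Real.sqrt 3 * frob (Bᵀ * B - 1)) ∧
    (∀ A : Matrix (Fin 3) (Fin 3) ℝ, 0 < (A + 1).det →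
      distSO3 (A + 1) ≤ 2 * Real.sqrt 3 * frob (Phi A)) := by
  have hsqrt3 : (1 : ℝ) ≤ Real.sqrt 3 := by
    rw [show (1:ℝ) = Real.sqrt 1 by simp]
    exact Real.sqrt_le_sqrt (by norm_num)
  have main : ∀ B : Matrix (Fin 3) (Fin 3) ℝ, 0 < B.det →
      distSO3 B ≤ Real.sqrt 3 * frob (Bᵀ * B - 1) := by
    intro B hB
    calc distSO3 B ≤ frob (Bᵀ * B - 1) := distSO3_le B hB
      _ ≤ Real.sqrt 3 * frob (Bᵀ * B - 1) :=
          le_mul_of_one_le_left (frob_nonneg _) hsqrt3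
  refine ⟨main, ?_⟩
  intro A hA
  have hkey : (A + 1)ᵀ * (A + 1) - 1 = (2 : ℝ) • Phi A := by
    have h1 : (2 : ℝ) • Phi A = A + Aᵀ + Aᵀ * A := by
      unfold Phi symPart
      rw [smul_add, smul_smul, smul_smul]
      norm_num
    rw [h1, Matrix.transpose_add, Matrix.transpose_one]
    noncomm_ring
  have := main (A + 1) hA
  rw [hkey, frob_smul 2 (by norm_num)] at this
  calc distSO3 (A + 1) ≤ Real.sqrt 3 * (2 * frob (Phi A)) := this
    _ = 2 * Real.sqrt 3 * frob (Phi A) := by ring
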